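/- For every n ≥ 0, the real vector space HP_n of harmonic homogeneous polynomials of degree n in three variables, i.e. { P ∈ MvPolynomial.homogeneousSubmodule (Fin 3) ℝ n | Δ P = 0 } where Δ P = ∑_{i : Fin 3} pderiv i (pderiv i P), has dimension exactly 2n + 1 (its finrank over ℝ equals 2n + 1). -/

import Mathlib

/-- The Laplacian `Δ = ∑ᵢ ∂²/∂xᵢ²` on polynomials in three real variables, as a
linear map. -/
noncomputable def polyLaplacian : MvPolynomial (Fin 3) ℝ →ₗ[ℝ] MvPolynomial (Fin 3) ℝ :=
  ∑ i : Fin 3,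
    ((MvPolynomial.pderiv i).toLinearMap ∘ₗ (MvPolynomial.pderiv i).toLinearMap)

/-- The space of harmonic homogeneous polynomials of degree `n` in three variables. -/
noncomputable def harmonicHomogeneous (n : ℕ) : Submodule ℝ (MvPolynomial (Fin 3) ℝ) :=
  MvPolynomial.homogeneousSubmodule (Fin 3) ℝ n ⊓ LinearMap.ker polyLaplacian

open MvPolynomial Finsupp

lemma polyLaplacian_monomial (d : Fin 3 →₀ ℕ) (a : ℝ) :
    polyLaplacian (monomial d a)
      = ∑ i : Fin 3, monomial (d - single i 2) (a * (d i) * ((d i : ℕ) - 1 : ℕ)) := by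
  rw [polyLaplacian, LinearMap.sum_apply]
  refine Finset.sum_congr rfl fun i _ => ?_
  have h2 : (single i 1 + single i 1 : Fin 3 →₀ ℕ) = single i 2 := by
    rw [← Finsupp.single_add]
  simp only [LinearMap.comp_apply, Derivation.coeFn_coe, pderiv_monomial,
    Finsupp.tsub_apply, Finsupp.single_eq_same, mul_assoc]
  rw [tsub_tsub, h2]

lemma deg3 (d : Fin 3 →₀ ℕ) : d.degree = d 0 + d 1 + d 2 := by
  rw [Finsupp.degree_apply, Finset.sum_subset (Finset.subset_univ _)
    (fun x _ hx => Finsupp.notMem_support_iff.mp hx)]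
  exact Fin.sum_univ_three d

lemma single3_apply (i j : Fin 3) (m : ℕ) :
    (single i m : Fin 3 →₀ ℕ) j = if i = j then m else 0 := Finsupp.single_apply

lemma deg3_sub_single (d : Fin 3 →₀ ℕ) (i : Fin 3) (m : ℕ) (h : m ≤ d i) :
    (d - single i m).degree = d.degree - m := by
  have hj : ∀ j, (d - single i m) j = d j - (single i m) j :=
    fun j => Finsupp.tsub_apply d _ j
  rw [deg3, deg3, hj 0, hj 1, hj 2, single3_apply, single3_apply, single3_apply]
  fin_cases i <;> simp_all <;> omega

lemma deg3_add_single (d : Fin 3 →₀ ℕ) (i : Fin 3) (m : ℕ) :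
    (d + single i m).degree = d.degree + m := by
  have hj : ∀ j, (d + single i m) j = d j + (single i m) j :=
    fun j => Finsupp.add_apply d _ j
  rw [deg3, deg3, hj 0, hj 1, hj 2, single3_apply, single3_apply, single3_apply]
  fin_cases i <;> simp_all <;> omega

lemma homog_induction {n : ℕ} {p : Submodule ℝ (MvPolynomial (Fin 3) ℝ)}
    (h : ∀ d : Fin 3 →₀ ℕ, d.degree = n → (monomial d 1 : MvPolynomial (Fin 3) ℝ) ∈ p) :
    homogeneousSubmodule (Fin 3) ℝ n ≤ p := by
  rw [homogeneousSubmodule_eq_finsupp_supported, AddMonoidAlgebra.supported_eq_span_single,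
    Submodule.span_le]
  rintro _ ⟨d, hd, rfl⟩
  exact h d hd

lemma coeff_vanish (a : ℝ) (k : ℕ) (hk : k ≤ 1) : (a * (k : ℝ) * ((k - 1 : ℕ) : ℝ)) = 0 := by
  have : k = 0 ∨ k - 1 = 0 := by omega
  rcases this with h | h <;> simp [h]

lemma lap_le (n : ℕ) : homogeneousSubmodule (Fin 3) ℝ (n + 2) ≤
    (homogeneousSubmodule (Fin 3) ℝ n).comap polyLaplacian := by
  apply homog_induction
  intro d hd
  simp only [Submodule.mem_comap, polyLaplacian_monomial]
  apply Submodule.sum_mem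
  intro i _
  by_cases h2 : 2 ≤ d i
  · apply isHomogeneous_monomial
    rw [deg3_sub_single d i 2 h2, hd]; omega
  · rw [coeff_vanish 1 (d i) (by omega), map_zero]
    exact Submodule.zero_mem _

lemma lap_ker_le (n : ℕ) (hn : n ≤ 1) : homogeneousSubmodule (Fin 3) ℝ n ≤
    LinearMap.ker polyLaplacian := by
  apply homog_induction
  intro d hd
  simp only [LinearMap.mem_ker, polyLaplacian_monomial]
  apply Finset.sum_eq_zero
  intro i _
  have hdi : d i ≤ 1 := le_trans (Finsupp.le_degree i d) (hd ▸ hn)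
  rw [coeff_vanish 1 (d i) hdi, map_zero]

open MvPolynomial Finsupp in
lemma monomial_mem_map (n : ℕ) : ∀ k : ℕ, ∀ d : Fin 3 →₀ ℕ, d.degree = n → d 1 + d 2 ≤ k →
    (monomial d 1 : MvPolynomial (Fin 3) ℝ) ∈
      (homogeneousSubmodule (Fin 3) ℝ (n + 2)).map polyLaplacian := by
  intro k
  induction k using Nat.strong_induction_on with
  | _ k IH =>
  intro d hd hk
  set c : ℝ := (((d 0 + 2) * (d 0 + 1) : ℕ) : ℝ)⁻¹ with hc
  have hcn : (((d 0 + 2) * (d 0 + 1) : ℕ) : ℝ) ≠ 0 := by positivity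
  have hv0 : ((d + single 0 2 : Fin 3 →₀ ℕ) 0) = d 0 + 2 := by
    rw [Finsupp.add_apply, single3_apply]; simp [Fin.ext_iff]
  have hv1 : ((d + single 0 2 : Fin 3 →₀ ℕ) 1) = d 1 := by
    rw [Finsupp.add_apply, single3_apply]; simp [Fin.ext_iff]
  have hv2 : ((d + single 0 2 : Fin 3 →₀ ℕ) 2) = d 2 := by
    rw [Finsupp.add_apply, single3_apply]; simp [Fin.ext_iff]
  have hdeg_e : (d + single 0 2).degree = n + 2 := by rw [deg3_add_single, hd]
  have hmem_e : (monomial (d + single 0 2) c : MvPolynomial (Fin 3) ℝ)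
      ∈ homogeneousSubmodule (Fin 3) ℝ (n + 2) := isHomogeneous_monomial _ hdeg_e
  have key : polyLaplacian (monomial (d + single 0 2) c) =
      monomial d 1
      + monomial (d + single 0 2 - single 1 2) (c * (d 1) * ((d 1 : ℕ) - 1 : ℕ))
      + monomial (d + single 0 2 - single 2 2) (c * (d 2) * ((d 2 : ℕ) - 1 : ℕ)) := by
    rw [polyLaplacian_monomial, Fin.sum_univ_three, add_tsub_cancel_right, hv0, hv1, hv2]
    congr 2
    have h21 : d 0 + 2 - 1 = d 0 + 1 := by omega
    rw [h21, hc]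
    push_cast
    field_simp
  -- side terms
  have hside : ∀ i : Fin 3, i ≠ 0 → ((d + single 0 2 : Fin 3 →₀ ℕ) i) = d i →
      (monomial (d + single 0 2 - single i 2)
        (c * (d i) * ((d i : ℕ) - 1 : ℕ)) : MvPolynomial (Fin 3) ℝ) ∈
        (homogeneousSubmodule (Fin 3) ℝ (n + 2)).map polyLaplacian := by
    intro i hi hvi
    by_cases h2 : 2 ≤ d i
    · have hdeg : (d + single 0 2 - single i 2).degree = n := by
        rw [deg3_sub_single _ _ _ (by omega), deg3_add_single, hd]
        omega
      have hw1 : ((d + single 0 2 - single i 2 : Fin 3 →₀ ℕ) 1) = d 1 - (single i 2 : Fin 3 →₀ ℕ) 1 := by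
        rw [Finsupp.tsub_apply, hv1]
      have hw2 : ((d + single 0 2 - single i 2 : Fin 3 →₀ ℕ) 2) = d 2 - (single i 2 : Fin 3 →₀ ℕ) 2 := by
        rw [Finsupp.tsub_apply, hv2]
      have hlt : ((d + single 0 2 - single i 2 : Fin 3 →₀ ℕ) 1) + ((d + single 0 2 - single i 2 : Fin 3 →₀ ℕ) 2) < k := by
        rw [hw1, hw2]
        have hii : (single i 2 : Fin 3 →₀ ℕ) i = 2 := Finsupp.single_eq_same
        fin_cases i <;> simp_all [single3_apply] <;> omega
      have hm := IH _ hlt _ hdeg (le_refl _)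
      have hsm : (monomial (d + single 0 2 - single i 2)
          (c * (d i) * ((d i : ℕ) - 1 : ℕ)) : MvPolynomial (Fin 3) ℝ)
          = (c * (d i) * ((d i : ℕ) - 1 : ℕ)) • monomial (d + single 0 2 - single i 2) 1 := by
        simp [MvPolynomial.smul_monomial]
      rw [hsm]
      exact Submodule.smul_mem _ _ hm
    · rw [coeff_vanish c (d i) (by omega), map_zero]
      exact Submodule.zero_mem _
  have hs1 := hside 1 (by decide) hv1
  have hs2 := hside 2 (by decide) hv2
  have heq : (monomial d 1 : MvPolynomial (Fin 3) ℝ) =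
      polyLaplacian (monomial (d + single 0 2) c)
      - monomial (d + single 0 2 - single 1 2) (c * (d 1) * ((d 1 : ℕ) - 1 : ℕ))
      - monomial (d + single 0 2 - single 2 2) (c * (d 2) * ((d 2 : ℕ) - 1 : ℕ)) := by
    rw [key]; ring
  rw [heq]
  exact Submodule.sub_mem _ (Submodule.sub_mem _
    (Submodule.mem_map_of_mem hmem_e) hs1) hs2

open MvPolynomial Finsupp in
lemma lap_surj (n : ℕ) : homogeneousSubmodule (Fin 3) ℝ n ≤
    (homogeneousSubmodule (Fin 3) ℝ (n + 2)).map polyLaplacian := by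
  apply homog_induction
  intro d hd
  exact monomial_mem_map n (d 1 + d 2) d hd le_rfl

open Finsupp in
noncomputable def degEquiv (n : ℕ) :
    ↥{d : Fin 3 →₀ ℕ | Finsupp.degree d = n} ≃ (Σ a : Fin (n + 1), Fin (n + 1 - a)) where
  toFun d := ⟨⟨d.1 0, by have h := d.2; simp only [Set.mem_setOf_eq, deg3] at h; omega⟩,
    ⟨d.1 1, by
      have h := d.2; simp only [Set.mem_setOf_eq, deg3] at h
      show d.1 1 < n + 1 - d.1 0
      omega⟩⟩
  invFun x := ⟨Finsupp.equivFunOnFinite.symm ![x.1, x.2, n - x.1 - x.2], by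
    have h1 := x.1.2
    have h2 := x.2.2
    simp only [Set.mem_setOf_eq, deg3, Finsupp.coe_equivFunOnFinite_symm,
      Matrix.cons_val_zero, Matrix.cons_val_one, Matrix.head_cons]
    show (x.1 : ℕ) + (x.2 : ℕ) + (n - x.1 - x.2) = n
    omega⟩
  left_inv d := by
    apply Subtype.ext
    apply Finsupp.ext
    intro j
    have h := d.2
    simp only [Set.mem_setOf_eq, deg3] at h
    fin_cases j <;> simp <;> omega
  right_inv x := rfl

noncomputable instance degFintype (n : ℕ) : Fintype ↥{d : Fin 3 →₀ ℕ | Finsupp.degree d = n} :=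
  Fintype.ofEquiv _ (degEquiv n).symm

open MvPolynomial in
noncomputable def homogBasis (n : ℕ) :
    Module.Basis ↥{d : Fin 3 →₀ ℕ | Finsupp.degree d = n} ℝ (homogeneousSubmodule (Fin 3) ℝ n) :=
  (MvPolynomial.basisRestrictSupport ℝ {d : Fin 3 →₀ ℕ | Finsupp.degree d = n}).map
    (LinearEquiv.ofEq _ _ (by rw [homogeneousSubmodule_eq_finsupp_supported]; rfl))

open MvPolynomial in
lemma finrank_homog (n : ℕ) :
    Module.finrank ℝ (homogeneousSubmodule (Fin 3) ℝ n)
      = ∑ a ∈ Finset.range (n + 1), (n + 1 - a) := by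
  rw [Module.finrank_eq_card_basis (homogBasis n), Fintype.card_congr (degEquiv n),
    Fintype.card_sigma]
  simp only [Fintype.card_fin]
  exact Fin.sum_univ_eq_sum_range _ _

open MvPolynomial in
instance homogFD (n : ℕ) : FiniteDimensional ℝ (homogeneousSubmodule (Fin 3) ℝ n) :=
  Module.Finite.of_basis (homogBasis n)

lemma S_step (n : ℕ) : ∑ a ∈ Finset.range (n + 3), (n + 3 - a)
    = (∑ a ∈ Finset.range (n + 1), (n + 1 - a)) + (2 * n + 5) := by
  rw [Finset.sum_range_succ, Finset.sum_range_succ]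
  have h : ∑ a ∈ Finset.range (n + 1), (n + 3 - a)
      = ∑ a ∈ Finset.range (n + 1), ((n + 1 - a) + 2) :=
    Finset.sum_congr rfl fun a ha => by have := Finset.mem_range.mp ha; omega
  rw [h, Finset.sum_add_distrib, Finset.sum_const, Finset.card_range, smul_eq_mul]
  omega

open MvPolynomial in
set_option synthInstance.maxHeartbeats 1000000 in
/-- The space of harmonic homogeneous polynomials of degree `n` in three variables has
dimension `2n + 1`. -/
theorem finrank_harmonicHomogeneous (n : ℕ) :
    Module.finrank ℝ (harmonicHomogeneous n) = 2 * n + 1 := by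
  match n with
  | 0 | 1 =>
    rw [show harmonicHomogeneous _ = homogeneousSubmodule (Fin 3) ℝ _ from
      inf_eq_left.mpr (lap_ker_le _ (by norm_num)), finrank_homog]
    decide
  | (m + 2) =>
    set V := homogeneousSubmodule (Fin 3) ℝ (m + 2) with hV
    set W := homogeneousSubmodule (Fin 3) ℝ m with hW
    set L : V →ₗ[ℝ] W := polyLaplacian.restrict (fun x hx => lap_le m hx) with hL
    have hsurj : Function.Surjective L := by
      rintro ⟨y, hy⟩
      obtain ⟨x, hxV, hx⟩ := lap_surj m hy
      exact ⟨⟨x, hxV⟩, Subtype.ext hx⟩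
    have hker : LinearMap.ker L = (harmonicHomogeneous (m + 2)).comap V.subtype := by
      ext x
      simp only [LinearMap.mem_ker, Submodule.mem_comap, harmonicHomogeneous,
        Submodule.mem_inf, Submodule.coe_subtype, LinearMap.mem_ker]
      constructor
      · intro h
        refine ⟨x.2, ?_⟩
        have := congrArg Subtype.val h
        rwa [LinearMap.restrict_apply] at this
      · intro h
        apply Subtype.ext
        rw [LinearMap.restrict_apply]
        exact h.2
    have hle : harmonicHomogeneous (m + 2) ≤ V := inf_le_left
    have hrk := LinearMap.finrank_range_add_finrank_ker L
    rw [LinearMap.range_eq_top.mpr hsurj, finrank_top, hker] at hrk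
    have heqv : Module.finrank ℝ ((harmonicHomogeneous (m + 2)).comap V.subtype)
        = Module.finrank ℝ (harmonicHomogeneous (m + 2)) :=
      (Submodule.comapSubtypeEquivOfLe hle).finrank_eq
    rw [heqv] at hrk
    have h1 : Module.finrank ℝ V = ∑ a ∈ Finset.range (m + 3), (m + 3 - a) := finrank_homog _
    have h2 : Module.finrank ℝ W = ∑ a ∈ Finset.range (m + 1), (m + 1 - a) := finrank_homog _
    have h3 := S_step m
    omega
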